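/- Let N ≥ 2, let q, t ∈ ℂ∖{0} with |q| < 1, and let x_1,…,x_N ∈ ℂ∖{0} be such that for all 1 ≤ i < j ≤ N and all integers n ≥ 0 one has x_i ≠ q^n x_j and t x_i ≠ q^n x_j. Define the absolutely convergent infinite product Δ(x) := ∏_{1 ≤ i < j ≤ N} ∏_{n ≥ 1} (1 − q^n x_j/x_i) / (1 − t^{−1} q^n x_j/x_i). Then for every a ∈ {1,…,N}: Δ(x) · ∏_{1 ≤ i ≤ a < j ≤ N} (1 − x_j/x_i) = Δ(x^{(a)}) · ∏_{1 ≤ i ≤ a < j ≤ N} (1 − x_j/(t x_i)), where x^{(a)} = (q x_1, …, q x_a, x_{a+1}, …, x_N). (This says that the type-A infinite product Δ(x) satisfies the system of q-difference equations characterizing the leading coefficient of the universal Macdonald solution, the key step in proving P(x;s) = Δ(x) Q(s;x).) -/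

import Mathlib

open scoped BigOperators

noncomputable section

open Filter Complex

set_option maxHeartbeats 1000000 in
lemma mult_ratio (q r d : ℂ) (hq : ‖q‖ < 1)
    (hnum : ∀ n : ℕ, (1 : ℂ) - r * q ^ (n + 1) ≠ 0)
    (hden : ∀ n : ℕ, (1 : ℂ) - d * q ^ (n + 1) ≠ 0) :
    Multipliable (fun n : ℕ => ((1 : ℂ) - r * q ^ (n + 1)) / (1 - d * q ^ (n + 1))) := by
  have hq' : ‖q‖ < 1 := hq
  refine Complex.multipliable_of_summable_log ?_
  have key : ∀ n : ℕ, ((1 : ℂ) - r * q ^ (n + 1)) / (1 - d * q ^ (n + 1))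
      = 1 + (d - r) * q ^ (n + 1) / (1 - d * q ^ (n + 1)) := by
    intro n
    rw [div_eq_iff (hden n), add_mul, div_mul_cancel₀ _ (hden n), one_mul]
    ring
  simp only [key]
  refine Summable.of_norm_bounded_eventually_nat
    (g := fun n => 3 * ‖d - r‖ * ‖q‖ ^ (n + 1)) ?_ ?_
  · exact (summable_nat_add_iff 1).mpr
      ((summable_geometric_of_lt_one (norm_nonneg q) hq').mul_left (3 * ‖d - r‖))
  · have h0 : Filter.Tendsto (fun n : ℕ => ‖q‖ ^ (n + 1)) atTop (nhds 0) := by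
      have := (tendsto_pow_atTop_nhds_zero_of_lt_one (norm_nonneg q) hq').comp
          (tendsto_add_atTop_nat 1)
      exact this
    have hev1 : ∀ᶠ n : ℕ in atTop, ‖d‖ * ‖q‖ ^ (n + 1) < 1 / 2 := by
      have h := (h0.const_mul ‖d‖).eventually_lt_const
        (show (‖d‖ * 0 : ℝ) < 1/2 by norm_num)
      simpa using h
    have hev2 : ∀ᶠ n : ℕ in atTop, ‖d - r‖ * ‖q‖ ^ (n + 1) < 1 / 4 := by
      have h := (h0.const_mul ‖d - r‖).eventually_lt_const
        (show (‖d - r‖ * 0 : ℝ) < 1/4 by norm_num)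
      simpa using h
    filter_upwards [hev1, hev2] with n h1 h2
    set w : ℂ := q ^ (n + 1) with hw
    have hwn : ‖w‖ = ‖q‖ ^ (n + 1) := by rw [hw, norm_pow]
    have hDpos : (1:ℝ)/2 ≤ ‖(1 : ℂ) - d * w‖ := by
      have hdw : ‖d * w‖ < 1/2 := by rw [norm_mul, hwn]; exact h1
      have h3 : ‖(1:ℂ)‖ - ‖d * w‖ ≤ ‖(1 : ℂ) - d * w‖ := norm_sub_norm_le _ _
      rw [norm_one] at h3
      linarith
    have hA : ‖(d - r) * w / (1 - d * w)‖ ≤ 2 * (‖d - r‖ * ‖w‖) := by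
      rw [norm_div, norm_mul]
      have hD0 : (0:ℝ) < ‖(1 : ℂ) - d * w‖ := by linarith
      rw [div_le_iff₀ hD0]
      nlinarith [mul_nonneg (norm_nonneg (d - r)) (norm_nonneg w), hDpos]
    have hAhalf : ‖(d - r) * w / (1 - d * w)‖ ≤ 1 / 2 := by
      rw [hwn] at hA; linarith
    calc ‖Complex.log (1 + (d - r) * w / (1 - d * w))‖
        ≤ 3 / 2 * ‖(d - r) * w / (1 - d * w)‖ :=
          Complex.norm_log_one_add_half_le_self hAhalf
      _ ≤ 3 / 2 * (2 * (‖d - r‖ * ‖w‖)) := by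
          nlinarith [norm_nonneg ((d - r) * w / (1 - d * w))]
      _ = 3 * ‖d - r‖ * ‖q‖ ^ (n + 1) := by rw [hwn]; ring

lemma key_shift (q t xi xj : ℂ) (hq0 : q ≠ 0) (hq : ‖q‖ < 1)
    (hxi : xi ≠ 0) (ht : t ≠ 0)
    (hnum : ∀ n : ℕ, xi ≠ q ^ n * xj) (hden : ∀ n : ℕ, t * xi ≠ q ^ n * xj) :
    (∏' n : ℕ, (1 - q ^ (n + 1) * xj / (q * xi)) / (1 - t⁻¹ * q ^ (n + 1) * xj / (q * xi)))
    = ((1 - xj / xi) / (1 - t⁻¹ * xj / xi)) *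
      ∏' n : ℕ, (1 - q ^ (n + 1) * xj / xi) / (1 - t⁻¹ * q ^ (n + 1) * xj / xi) := by
  have hnum' : ∀ n : ℕ, (1 : ℂ) - q ^ n * xj / xi ≠ 0 := by
    intro n h
    apply hnum n
    have h2 : q ^ n * xj / xi = 1 := by linear_combination -h
    field_simp at h2
    rw [h2]
  have hden' : ∀ n : ℕ, (1 : ℂ) - t⁻¹ * q ^ n * xj / xi ≠ 0 := by
    intro n h
    apply hden n
    have h2 : t⁻¹ * q ^ n * xj / xi = 1 := by linear_combination -h
    field_simp at h2
    linear_combination -h2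
  set G : ℕ → ℂ := fun m => (1 - q ^ m * xj / xi) / (1 - t⁻¹ * q ^ m * xj / xi) with hG
  have hL : ∀ n : ℕ, (1 - q ^ (n + 1) * xj / (q * xi)) / (1 - t⁻¹ * q ^ (n + 1) * xj / (q * xi))
      = G n := by
    intro n
    simp only [hG]
    have e1 : q ^ (n + 1) * xj / (q * xi) = q ^ n * xj / xi := by
      rw [pow_succ]; field_simp
    have e2 : t⁻¹ * q ^ (n + 1) * xj / (q * xi) = t⁻¹ * q ^ n * xj / xi := by
      rw [pow_succ]; field_simp
    rw [e1, e2]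
  rw [tprod_congr hL]
  have hmult : Multipliable fun n : ℕ => G (n + 1) := by
    have hm := mult_ratio q (xj / xi) (t⁻¹ * xj / xi) hq
      (fun n => by
        have h := hnum' (n + 1)
        rw [show (1 : ℂ) - xj / xi * q ^ (n + 1) = 1 - q ^ (n + 1) * xj / xi by ring]
        exact h)
      (fun n => by
        have h := hden' (n + 1)
        rw [show (1 : ℂ) - t⁻¹ * xj / xi * q ^ (n + 1) = 1 - t⁻¹ * q ^ (n + 1) * xj / xi by ring]
        exact h)
    refine hm.congr fun n => ?_
    simp only [hG]
    congr 1 <;> ring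
  rw [tprod_eq_zero_mul' hmult]
  congr 1
  simp only [hG, pow_zero, one_mul, mul_one]


/-- The type-`A_{N-1}^{(1)}` infinite product
`Δ(x) = ∏_{1≤i<j≤N} ∏_{n≥1} (1 - qⁿ x_j/x_i)/(1 - t⁻¹ qⁿ x_j/x_i)`,
absolutely convergent for `|q| < 1` under the stated nonvanishing hypotheses. -/
noncomputable def DeltaA (N : ℕ) (q t : ℂ) (x : ℕ → ℂ) : ℂ :=
  ∏ i ∈ Finset.Icc 1 N, ∏ j ∈ Finset.Icc (i + 1) N,
    ∏' n : ℕ, (1 - q ^ (n + 1) * x j / x i) / (1 - t⁻¹ * q ^ (n + 1) * x j / x i)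

/-- The infinite product `Δ(x)` satisfies the system of q-difference equations
characterizing the leading coefficient of the universal Macdonald solution: for every
`a ∈ {1,…,N}`,
`Δ(x) ∏_{1≤i≤a<j≤N} (1 - x_j/x_i) = Δ(x^{(a)}) ∏_{1≤i≤a<j≤N} (1 - x_j/(t x_i))`,
where `x^{(a)} = (q x_1, …, q x_a, x_{a+1}, …, x_N)`. -/
theorem DeltaA_q_difference (N : ℕ) (hN : 2 ≤ N) (q t : ℂ) (hq0 : q ≠ 0)
    (hq : ‖q‖ < 1) (ht : t ≠ 0) (x : ℕ → ℂ)
    (hx : ∀ i ∈ Finset.Icc 1 N, x i ≠ 0)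
    (hsep : ∀ i ∈ Finset.Icc 1 N, ∀ j ∈ Finset.Icc 1 N, i < j → ∀ n : ℕ,
      x i ≠ q ^ n * x j ∧ t * x i ≠ q ^ n * x j)
    (a : ℕ) (ha1 : 1 ≤ a) (haN : a ≤ N) :
    DeltaA N q t x *
        ∏ i ∈ Finset.Icc 1 a, ∏ j ∈ Finset.Icc (a + 1) N, (1 - x j / x i) =
      DeltaA N q t (fun i => if i ≤ a then q * x i else x i) *
        ∏ i ∈ Finset.Icc 1 a, ∏ j ∈ Finset.Icc (a + 1) N, (1 - x j / (t * x i)) := by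
  have hΔ : DeltaA N q t (fun i => if i ≤ a then q * x i else x i) =
      (∏ i ∈ Finset.Icc 1 a, ∏ j ∈ Finset.Icc (a + 1) N,
        ((1 - x j / x i) / (1 - t⁻¹ * x j / x i))) * DeltaA N q t x := by
    rw [DeltaA, DeltaA]
    have step1 : (∏ i ∈ Finset.Icc 1 N, ∏ j ∈ Finset.Icc (i + 1) N,
        ∏' n : ℕ, (1 - q ^ (n + 1) * (if j ≤ a then q * x j else x j) /
            (if i ≤ a then q * x i else x i)) /
          (1 - t⁻¹ * q ^ (n + 1) * (if j ≤ a then q * x j else x j) /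
            (if i ≤ a then q * x i else x i))) =
        ∏ i ∈ Finset.Icc 1 N, ∏ j ∈ Finset.Icc (i + 1) N,
          ((if i ≤ a ∧ a + 1 ≤ j then (1 - x j / x i) / (1 - t⁻¹ * x j / x i) else 1) *
            ∏' n : ℕ, (1 - q ^ (n + 1) * x j / x i) / (1 - t⁻¹ * q ^ (n + 1) * x j / x i)) := by
      refine Finset.prod_congr rfl fun i hi => Finset.prod_congr rfl fun j hj => ?_
      rw [Finset.mem_Icc] at hi hj
      have hcancel : ∀ c : ℂ, c * (q * x j) / (q * x i) = c * x j / x i := by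
        intro c
        rw [mul_div_assoc, mul_div_mul_left _ _ hq0, ← mul_div_assoc]
      by_cases hja : j ≤ a
      · have hia : i ≤ a := by omega
        simp only [if_pos hja, if_pos hia,
          if_neg (show ¬(i ≤ a ∧ a + 1 ≤ j) by omega), one_mul]
        refine tprod_congr fun n => ?_
        rw [hcancel, hcancel]
      · by_cases hia : i ≤ a
        · simp only [if_neg hja, if_pos hia,
            if_pos (show i ≤ a ∧ a + 1 ≤ j from ⟨hia, by omega⟩)]
          exact key_shift q t (x i) (x j) hq0 hq (hx i (Finset.mem_Icc.mpr ⟨hi.1, hi.2⟩)) ht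
            (fun n => (hsep i (Finset.mem_Icc.mpr ⟨hi.1, hi.2⟩)
              j (Finset.mem_Icc.mpr ⟨by omega, hj.2⟩) (by omega) n).1)
            (fun n => (hsep i (Finset.mem_Icc.mpr ⟨hi.1, hi.2⟩)
              j (Finset.mem_Icc.mpr ⟨by omega, hj.2⟩) (by omega) n).2)
        · simp only [if_neg hja, if_neg hia,
            if_neg (show ¬(i ≤ a ∧ a + 1 ≤ j) by tauto), one_mul]
    rw [step1, Finset.prod_congr rfl (fun (i : ℕ) _ => Finset.prod_mul_distrib
      (s := Finset.Icc (i + 1) N)), Finset.prod_mul_distrib]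
    congr 1
    calc (∏ i ∈ Finset.Icc 1 N, ∏ j ∈ Finset.Icc (i + 1) N,
          (if i ≤ a ∧ a + 1 ≤ j then (1 - x j / x i) / (1 - t⁻¹ * x j / x i) else 1))
        = ∏ i ∈ Finset.Icc 1 N, (if i ≤ a then
            ∏ j ∈ Finset.Icc (a + 1) N, (1 - x j / x i) / (1 - t⁻¹ * x j / x i) else 1) := by
          refine Finset.prod_congr rfl fun i hi => ?_
          rw [Finset.mem_Icc] at hi
          by_cases hia : i ≤ a
          · rw [if_pos hia]
            calc (∏ j ∈ Finset.Icc (i + 1) N,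
                  (if i ≤ a ∧ a + 1 ≤ j then (1 - x j / x i) / (1 - t⁻¹ * x j / x i) else 1))
                = ∏ j ∈ Finset.Icc (i + 1) N,
                  (if a + 1 ≤ j then (1 - x j / x i) / (1 - t⁻¹ * x j / x i) else 1) := by
                  refine Finset.prod_congr rfl fun j _ => ?_
                  simp [hia]
              _ = ∏ j ∈ (Finset.Icc (i + 1) N).filter (fun j => a + 1 ≤ j),
                  (1 - x j / x i) / (1 - t⁻¹ * x j / x i) := (Finset.prod_filter _ _).symm
              _ = ∏ j ∈ Finset.Icc (a + 1) N, (1 - x j / x i) / (1 - t⁻¹ * x j / x i) := by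
                  congr 1
                  ext j
                  simp only [Finset.mem_filter, Finset.mem_Icc]
                  omega
          · rw [if_neg hia]
            refine Finset.prod_eq_one fun j _ => if_neg (by tauto)
      _ = ∏ i ∈ (Finset.Icc 1 N).filter (· ≤ a),
            ∏ j ∈ Finset.Icc (a + 1) N, (1 - x j / x i) / (1 - t⁻¹ * x j / x i) :=
          (Finset.prod_filter _ _).symm
      _ = ∏ i ∈ Finset.Icc 1 a,
            ∏ j ∈ Finset.Icc (a + 1) N, (1 - x j / x i) / (1 - t⁻¹ * x j / x i) := by
          congr 1
          ext i
          simp only [Finset.mem_filter, Finset.mem_Icc]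
          omega
  rw [hΔ]
  have hEB : (∏ i ∈ Finset.Icc 1 a, ∏ j ∈ Finset.Icc (a + 1) N,
      ((1 - x j / x i) / (1 - t⁻¹ * x j / x i))) *
      (∏ i ∈ Finset.Icc 1 a, ∏ j ∈ Finset.Icc (a + 1) N, (1 - x j / (t * x i))) =
      ∏ i ∈ Finset.Icc 1 a, ∏ j ∈ Finset.Icc (a + 1) N, (1 - x j / x i) := by
    rw [← Finset.prod_mul_distrib]
    refine Finset.prod_congr rfl fun i hi => ?_
    rw [← Finset.prod_mul_distrib]
    refine Finset.prod_congr rfl fun j hj => ?_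
    rw [Finset.mem_Icc] at hi hj
    have hxi : x i ≠ 0 := hx i (Finset.mem_Icc.mpr ⟨hi.1, by omega⟩)
    have hd0 : t * x i ≠ x j := by
      have := (hsep i (Finset.mem_Icc.mpr ⟨hi.1, by omega⟩)
        j (Finset.mem_Icc.mpr ⟨by omega, hj.2⟩) (by omega) 0).2
      simpa using this
    have hd : (1 : ℂ) - t⁻¹ * x j / x i ≠ 0 := by
      intro h
      apply hd0
      have h2 : t⁻¹ * x j / x i = 1 := by linear_combination -h
      field_simp at h2
      linear_combination -h2
    have he : x j / (t * x i) = t⁻¹ * x j / x i := by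
      rw [mul_comm t (x i), ← div_div, div_eq_mul_inv (x j / x i) t]
      ring
    rw [he, div_mul_cancel₀ _ hd]
  calc DeltaA N q t x * ∏ i ∈ Finset.Icc 1 a, ∏ j ∈ Finset.Icc (a + 1) N, (1 - x j / x i)
      = DeltaA N q t x * ((∏ i ∈ Finset.Icc 1 a, ∏ j ∈ Finset.Icc (a + 1) N,
          ((1 - x j / x i) / (1 - t⁻¹ * x j / x i))) *
        ∏ i ∈ Finset.Icc 1 a, ∏ j ∈ Finset.Icc (a + 1) N, (1 - x j / (t * x i))) := by
        rw [hEB]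
    _ = _ := by ring
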